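/- Let f : G → ℂ be continuous with compact support, and let F ⊆ G be a measurable fundamental domain with compact closure for the left translation action of Γ on G. For γ ∈ Γ let Γ_γ denote the centralizer of γ in Γ, and let F_γ ⊆ G be a measurable fundamental domain for the left translation action of Γ_γ on G. Then only finitely many conjugacy classes [γ] of Γ contribute, and ∫_F ( Σ_{γ ∈ Γ} f(x⁻¹ γ x) · tr χ(γ) ) dμ(x) = Σ_{[γ]} tr χ(γ) · ∫_{F_γ} f(x⁻¹ γ x) dμ(x), where the sum on the right runs over a set of representatives γ of the conjugacy classes of Γ. (Here tr χ(γ) depends only on the conjugacy class of γ, the function x ↦ f(x⁻¹ γ x) is invariant under left translation of x by elements of Γ_γ, so the integral over F_γ is independent of the choice of F_γ, and all sums and integrals occurring converge absolutely.) -/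

import Mathlib

open MeasureTheory Set Topology Filter Pointwise

/-- A discrete subgroup meets any compact set in finitely many points. -/
lemma discrete_inter_compact_finite {G : Type*} [Group G] [TopologicalSpace G]
    [IsTopologicalGroup G] [T2Space G]
    (Γ : Subgroup G) [DiscreteTopology Γ] {C : Set G} (hC : IsCompact C) :
    {γ : Γ | (γ : G) ∈ C}.Finite := by
  by_contra hinf
  replace hinf : Set.Infinite {γ : Γ | (γ : G) ∈ C} := hinf
  have hSinf : ((↑) '' {γ : Γ | (γ : G) ∈ C} : Set G).Infinite :=
    hinf.image (Set.injOn_of_injective Subtype.val_injective)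
  have hsub : ((↑) '' {γ : Γ | (γ : G) ∈ C} : Set G) ⊆ C := by
    rintro _ ⟨γ, hγ, rfl⟩; exact hγ
  set S : Set G := (↑) '' {γ : Γ | (γ : G) ∈ C} with hSdef
  have hSΓ : S ⊆ (Γ : Set G) := by rintro _ ⟨γ, -, rfl⟩; exact γ.2
  obtain ⟨x, -, hx⟩ := hSinf.exists_accPt_cofinite_inf_principal_of_subset_isCompact hC hsub
  -- discreteness: a neighborhood of 1 meeting Γ only in 1
  obtain ⟨V, hV, hVΓ⟩ := nhds_inter_eq_singleton_of_mem_discrete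
    (isDiscrete_iff_discreteTopology.mpr ‹_› : IsDiscrete (Γ : Set G)) (Γ.one_mem)
  -- neighborhood U of x with U⁻¹ * U ⊆ V
  have hcont : ContinuousAt (fun p : G × G => p.1⁻¹ * p.2) (x, x) :=
    (continuous_fst.inv.mul continuous_snd).continuousAt
  have hmem : (fun p : G × G => p.1⁻¹ * p.2) ⁻¹' V ∈ 𝓝 (x, x) := by
    apply hcont; simpa using hV
  rw [mem_nhds_prod_iff] at hmem
  obtain ⟨U₁, hU₁, U₂, hU₂, hU⟩ := hmem
  have hUx : U₁ ∩ U₂ ∈ 𝓝 x := Filter.inter_mem hU₁ hU₂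
  -- U ∩ S is infinite
  have hinf' : ((U₁ ∩ U₂) ∩ S).Infinite := by
    intro hfin
    have h1 : U₁ ∩ U₂ ∈ 𝓝[≠] x := mem_nhdsWithin_of_mem_nhds hUx
    have h2 : ((U₁ ∩ U₂) ∩ S)ᶜ ∈ (Filter.cofinite : Filter G) := by
      simpa using hfin
    have h3 : (U₁ ∩ U₂) ∩ (((U₁ ∩ U₂) ∩ S)ᶜ ∩ S) ∈
        𝓝[≠] x ⊓ (Filter.cofinite ⊓ Filter.principal S) :=
      Filter.inter_mem (Filter.mem_inf_of_left h1)
        (Filter.mem_inf_of_right (Filter.inter_mem (Filter.mem_inf_of_left h2)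
          (Filter.mem_inf_of_right (Filter.mem_principal_self S))))
    obtain ⟨y, hy⟩ := hx.nonempty_of_mem h3
    exact hy.2.1 ⟨hy.1, hy.2.2⟩
  obtain ⟨γ₁, h₁, γ₂, h₂, hne⟩ := hinf'.nontrivial
  have : γ₁⁻¹ * γ₂ ∈ V ∩ (Γ : Set G) := by
    constructor
    · exact hU (Set.mk_mem_prod h₁.1.1 h₂.1.2)
    · exact mul_mem (inv_mem (hSΓ h₁.2)) (hSΓ h₂.2)
  rw [hVΓ] at this
  exact hne (by
    have : γ₁⁻¹ * γ₂ = 1 := this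
    rw [inv_mul_eq_one] at this
    exact this)


lemma integrableOn_of_compact_closure {G : Type*} [TopologicalSpace G] [MeasurableSpace G]
    [OpensMeasurableSpace G] [T2Space G] (μ : Measure G) [IsFiniteMeasureOnCompacts μ]
    {φ : G → ℂ} (hφ : Continuous φ) {s : Set G} (hs : IsCompact (closure s)) :
    IntegrableOn φ s μ :=
  (hφ.continuousOn.integrableOn_compact hs).mono_set subset_closure

lemma subgroup_decomp
    {G : Type*} [Group G] [TopologicalSpace G] [IsTopologicalGroup G] [T2Space G]
    [MeasurableSpace G] [BorelSpace G]
    (μ : Measure G) [μ.IsHaarMeasure]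
    (Γ : Subgroup G) [Countable Γ]
    (H : Subgroup Γ)
    {F : Set G} (hF : IsFundamentalDomain Γ F μ) (hFc : IsCompact (closure F))
    {t : Set G} (ht : IsFundamentalDomain ((H.map Γ.subtype : Subgroup G)) t μ)
    (φ : G → ℂ) (hφ : Continuous φ)
    (hinv : ∀ h : Γ, h ∈ H → ∀ x : G, φ ((h : G) * x) = φ x)
    (hfin : {q : Γ ⧸ H | ∃ x ∈ F, φ (((Quotient.out q : Γ) : G)⁻¹ * x) ≠ 0}.Finite) :
    ∫ x in t, φ x ∂μ
      = ∑' q : Γ ⧸ H, ∫ x in F, φ (((Quotient.out q : Γ) : G)⁻¹ * x) ∂μ := by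
  classical
  haveI : Countable (Γ ⧸ H) := Quotient.countable
  have hsmul : ∀ (γ : Γ) (x : G), γ • x = (γ : G) * x := fun γ x => rfl
  have hsmulset : ∀ (γ : Γ), γ • F = (γ : G) • F := by
    intro γ; ext x
    simp only [Set.mem_smul_set]
    exact ⟨fun ⟨y, hy, h⟩ => ⟨y, hy, h⟩, fun ⟨y, hy, h⟩ => ⟨y, hy, h⟩⟩
  -- the pieces
  set τ : Γ ⧸ H → Γ := fun q => Quotient.out q with hτ
  have hτq : ∀ q : Γ ⧸ H, QuotientGroup.mk (τ q) = q := fun q => QuotientGroup.out_eq' q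
  set piece : Γ ⧸ H → Set G := fun q => ((((τ q)⁻¹ : Γ) : G)) • F with hpiece
  have hmeas : ∀ g : G, NullMeasurableSet (g • F) μ := by
    intro g
    have h1 : g • F = (fun x => g⁻¹ * x) ⁻¹' F := by
      ext x
      rw [Set.mem_smul_set_iff_inv_smul_mem]
      simp [smul_eq_mul]
    rw [h1]
    exact hF.nullMeasurableSet.preimage (measurePreserving_mul_left μ g⁻¹).quasiMeasurePreserving
  have hdis : ∀ (γ₁ γ₂ : Γ), γ₁ ≠ γ₂ → AEDisjoint μ ((γ₁ : G) • F) ((γ₂ : G) • F) := by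
    intro γ₁ γ₂ h12
    have := hF.aedisjoint h12
    simpa only [Function.onFun, hsmulset] using this
  set D : Set G := ⋃ q : Γ ⧸ H, piece q with hD
  have hτinj : Function.Injective τ := fun q q' h => by
    rw [← hτq q, ← hτq q', h]
  -- D is a fundamental domain for H (inside G)
  have hDfund : IsFundamentalDomain ((H.map Γ.subtype : Subgroup G)) D μ := by
    refine ⟨?_, ?_, ?_⟩
    · exact NullMeasurableSet.iUnion fun q => hmeas _
    · filter_upwards [hF.ae_covers] with x hx
      obtain ⟨γ, hγ⟩ := hx
      rw [hsmul] at hγ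
      have hmem : (τ (QuotientGroup.mk γ))⁻¹ * γ ∈ H :=
        (QuotientGroup.eq (s := H)).mp (hτq (QuotientGroup.mk γ))
      refine ⟨⟨(((τ (QuotientGroup.mk γ))⁻¹ * γ : Γ) : G),
        Subgroup.mem_map.mpr ⟨_, hmem, rfl⟩⟩, ?_⟩
      have hmem2 : (((τ (QuotientGroup.mk γ))⁻¹ * γ : Γ) : G) * x ∈ piece (QuotientGroup.mk γ) := by
        rw [hpiece]
        refine ⟨(γ : G) * x, hγ, ?_⟩
        push_cast
        simp only [smul_eq_mul]
        group
      exact Set.mem_iUnion.mpr ⟨_, hmem2⟩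
    · intro a b hab
      obtain ⟨a', ha'H, ha'⟩ := Subgroup.mem_map.mp a.2
      obtain ⟨b', hb'H, hb'⟩ := Subgroup.mem_map.mp b.2
      have h1 : (a • D : Set G) = (a : G) • D := by
        ext x
        simp only [Set.mem_smul_set]
        exact ⟨fun ⟨y, hy, h⟩ => ⟨y, hy, h⟩, fun ⟨y, hy, h⟩ => ⟨y, hy, h⟩⟩
      have h2 : (b • D : Set G) = (b : G) • D := by
        ext x
        simp only [Set.mem_smul_set]
        exact ⟨fun ⟨y, hy, h⟩ => ⟨y, hy, h⟩, fun ⟨y, hy, h⟩ => ⟨y, hy, h⟩⟩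
      have hsetA : (a : G) • D = ⋃ q, (((a' * (τ q)⁻¹ : Γ) : G)) • F := by
        rw [hD, Set.smul_set_iUnion]
        refine Set.iUnion_congr fun q => ?_
        rw [hpiece, smul_smul]
        congr 1
        push_cast
        rw [← ha']
        rfl
      have hsetB : (b : G) • D = ⋃ q, (((b' * (τ q)⁻¹ : Γ) : G)) • F := by
        rw [hD, Set.smul_set_iUnion]
        refine Set.iUnion_congr fun q => ?_
        rw [hpiece, smul_smul]
        congr 1
        push_cast
        rw [← hb']
        rfl
      rw [Function.onFun, h1, h2, hsetA, hsetB,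
        MeasureTheory.AEDisjoint.iUnion_left_iff]
      intro q
      rw [MeasureTheory.AEDisjoint.iUnion_right_iff]
      intro q'
      apply hdis
      intro heq
      apply hab
      have h4 : a' = (b' * (τ q')⁻¹) * (τ q) := mul_inv_eq_iff_eq_mul.mp heq
      have hmemH : (τ q')⁻¹ * (τ q) ∈ H := by
        have h5 : (τ q')⁻¹ * (τ q) = b'⁻¹ * a' := by rw [h4]; group
        rw [h5]
        exact mul_mem (inv_mem hb'H) ha'H
      have hqq : q' = q := by
        have := (QuotientGroup.eq (s := H)).mpr hmemH
        rwa [hτq, hτq] at this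
      subst hqq
      have h6 : a' = b' := mul_right_cancel heq
      apply Subtype.ext
      rw [← ha', ← hb', h6]
  -- invariance for the mapped subgroup
  have hinv' : ∀ (g : ↥(H.map Γ.subtype)) (x : G), φ (g • x) = φ x := by
    intro g x
    obtain ⟨h, hH, hh⟩ := Subgroup.mem_map.mp g.2
    show φ ((g : G) * x) = φ x
    have : (g : G) = (h : G) := by rw [← hh]; rfl
    rw [this]
    exact hinv h hH x
  haveI : Countable ↥(Subgroup.map Γ.subtype H) := by
    have h1 : ((Subgroup.map Γ.subtype H : Subgroup G) : Set G) ⊆ (Γ : Set G) := by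
      rintro x ⟨y, -, rfl⟩; exact y.2
    have hΓc : (Γ : Set G).Countable := Set.countable_coe_iff.mp inferInstance
    exact (hΓc.mono h1).to_subtype
  have step1 : ∫ x in t, φ x ∂μ = ∫ x in D, φ x ∂μ := ht.setIntegral_eq hDfund hinv'
  -- integrability on D
  set T : Finset (Γ ⧸ H) := hfin.toFinset with hT
  have hzero : ∀ q : Γ ⧸ H, q ∉ T → ∀ x ∈ piece q, φ x = 0 := by
    intro q hq x hx
    rw [hpiece] at hx
    obtain ⟨y, hy, rfl⟩ := hx
    by_contra hne
    apply hq
    rw [hT, Set.Finite.mem_toFinset]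
    refine ⟨y, hy, ?_⟩
    simpa [smul_eq_mul] using hne
  have hpieceInt : ∀ q : Γ ⧸ H, IntegrableOn φ (piece q) μ := by
    intro q
    apply integrableOn_of_compact_closure μ hφ
    rw [hpiece, closure_smul]
    exact hFc.smul _
  set W : Set G := ⋃ q ∈ T, piece q with hW
  set Z : Set G := ⋃ (q : Γ ⧸ H) (_ : q ∉ T), piece q with hZ
  have hDsub : D ⊆ W ∪ Z := by
    intro x hx
    obtain ⟨q, hq⟩ := Set.mem_iUnion.mp hx
    by_cases hqT : q ∈ T
    · exact Or.inl (Set.mem_iUnion₂.mpr ⟨q, hqT, hq⟩)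
    · exact Or.inr (Set.mem_iUnion₂.mpr ⟨q, hqT, hq⟩)
  have hWint : IntegrableOn φ W μ := by
    rw [hW]
    rw [integrableOn_finset_iUnion]
    exact fun q _ => hpieceInt q
  have hZzero : ∀ x ∈ Z, φ x = 0 := by
    intro x hx
    obtain ⟨q, hq, hxq⟩ := Set.mem_iUnion₂.mp hx
    exact hzero q hq x hxq
  have hZint : IntegrableOn φ Z μ := by
    have hms : MeasurableSet {x : G | φ x ≠ 0} := by
      exact ((isOpen_compl_singleton (x := (0 : ℂ))).preimage hφ).measurableSet
    have hrz : μ.restrict Z {x : G | φ x ≠ 0} = 0 := by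
      rw [Measure.restrict_apply hms]
      have he : {x : G | φ x ≠ 0} ∩ Z = ∅ := by
        ext x
        simp only [Set.mem_inter_iff, Set.mem_setOf_eq, Set.mem_empty_iff_false, iff_false,
          not_and]
        exact fun h1 h2 => h1 (hZzero x h2)
      rw [he, measure_empty]
    have h0 : φ =ᵐ[μ.restrict Z] 0 := by
      rw [Filter.EventuallyEq, ae_iff]
      simpa only [Pi.zero_apply] using hrz
    exact (integrable_zero _ _ _).congr h0.symm
  have hDint : IntegrableOn φ D μ := ((hWint.union hZint).mono_set hDsub)
  -- decompose the integral over D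
  have step2 : ∫ x in D, φ x ∂μ = ∑' q : Γ ⧸ H, ∫ x in piece q, φ x ∂μ := by
    rw [hD]
    apply integral_iUnion_ae
    · intro q; rw [hpiece]; exact hmeas _
    · intro q q' hqq
      rw [Function.onFun, hpiece]
      exact hdis _ _ (fun h => hqq (hτinj (inv_injective h)))
    · exact hDint
  -- compute the integral over each piece
  have step3 : ∀ g : G, ∫ x in g • F, φ x ∂μ = ∫ x in F, φ (g * x) ∂μ := by
    intro g
    have himg : g • F = (fun x : G => g * x) '' F := by
      ext x
      simp only [Set.mem_smul_set, Set.mem_image, smul_eq_mul]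
    rw [himg, (measurePreserving_mul_left μ g).setIntegral_image_emb
      (MeasurableEquiv.mulLeft g).measurableEmbedding φ F]
  rw [step1, step2]
  refine tsum_congr fun q => ?_
  rw [hpiece]
  rw [step3]
  norm_cast


/-- Geometric side of the trace formula: for `f : G → ℂ` continuous
with compact support, a fundamental domain `F` with compact closure for `Γ`, a set `S`
of representatives of the conjugacy classes of `Γ`, and fundamental domains `F_γ` for
the centralizers `Γ_γ`, only finitely many conjugacy classes contribute and
`∫_F Σ_{γ ∈ Γ} f (x⁻¹ γ x) tr χ(γ) dμ x
  = Σ_{[γ]} tr χ(γ) ∫_{F_γ} f (x⁻¹ γ x) dμ x`. -/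
theorem geometric_side_of_trace_formula
    {G V : Type*} [Group G] [TopologicalSpace G] [IsTopologicalGroup G]
    [LocallyCompactSpace G] [T2Space G] [SecondCountableTopology G]
    [MeasurableSpace G] [BorelSpace G] (μ : Measure G)
    [μ.IsHaarMeasure] [μ.IsMulRightInvariant]
    [NormedAddCommGroup V] [NormedSpace ℂ V] [FiniteDimensional ℂ V] [Nontrivial V]
    (Γ : Subgroup G) [DiscreteTopology Γ]
    (hcocompact : ∃ C : Set G, IsCompact C ∧ ∀ g : G, ∃ γ ∈ Γ, γ * g ∈ C)
    (χ : Γ →* (V →ₗ[ℂ] V)ˣ)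
    (f : G → ℂ) (hf : Continuous f) (hfsupp : HasCompactSupport f)
    (F : Set G) (hF : IsFundamentalDomain Γ F μ) (hFc : IsCompact (closure F))
    (S : Set Γ) (hS : ∀ δ : Γ, ∃! σ, σ ∈ S ∧ IsConj σ δ)
    (Fc : Γ → Set G)
    (hFc' : ∀ γ : Γ,
      IsFundamentalDomain ((Subgroup.centralizer {γ}).map Γ.subtype) (Fc γ) μ) :
    {σ : Γ | σ ∈ S ∧ ∃ x : G, f (x⁻¹ * (σ : G) * x) ≠ 0}.Finite ∧
    (∫ x in F,
        (∑' γ : Γ, f (x⁻¹ * (γ : G) * x) * LinearMap.trace ℂ V (χ γ : V →ₗ[ℂ] V)) ∂μ) =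
      ∑' σ : S, LinearMap.trace ℂ V (χ (σ : Γ) : V →ₗ[ℂ] V) *
        ∫ x in Fc (σ : Γ), f (x⁻¹ * ((σ : Γ) : G) * x) ∂μ := by
  classical
  obtain ⟨C, hCcomp, hCcov⟩ := hcocompact
  haveI : Countable Γ := TopologicalSpace.separableSpace_iff_countable.mp inferInstance
  have hK : IsCompact (tsupport f) := hfsupp
  set K := tsupport f with hKdef
  set L := closure F with hLdef
  set tr : Γ → ℂ := fun γ => LinearMap.trace ℂ V (χ γ : V →ₗ[ℂ] V) with htr
  set I : Γ → ℂ := fun γ => ∫ x in F, f (x⁻¹ * (γ : G) * x) ∂μ with hI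
  set a : Γ → ℂ := fun γ => tr γ * I γ with ha
  -- trace is a class function
  have htrconj : ∀ τ σ : Γ, tr (τ * σ * τ⁻¹) = tr σ := by
    intro τ σ
    rw [htr]
    simp only
    rw [map_mul, map_mul, map_inv, Units.val_mul, Units.val_mul,
      LinearMap.trace_mul_comm, ← mul_assoc, Units.inv_mul, one_mul]
  -- Part 1 : finiteness of contributing conjugacy classes
  have hCKC : IsCompact (C * K * C⁻¹) := (hCcomp.mul hK).mul hCcomp.inv
  have hNc : {γ : Γ | (γ : G) ∈ C * K * C⁻¹}.Finite := discrete_inter_compact_finite Γ hCKC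
  have hpart1 : {σ : Γ | σ ∈ S ∧ ∃ x : G, f (x⁻¹ * (σ : G) * x) ≠ 0}.Finite := by
    set r : Γ → Γ := fun δ => (hS δ).choose with hr
    have hruniq : ∀ δ σ : Γ, σ ∈ S → IsConj σ δ → σ = r δ := fun δ σ h1 h2 =>
      ((hS δ).choose_spec).2 σ ⟨h1, h2⟩
    apply Set.Finite.subset (hNc.image r)
    rintro σ ⟨hσS, x, hx⟩
    obtain ⟨γ, hγΓ, hγC⟩ := hCcov x
    set γ' : Γ := ⟨γ, hγΓ⟩ with hγ'
    refine ⟨γ' * σ * γ'⁻¹, ?_, (hruniq _ σ hσS ?_).symm⟩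
    · show ((γ' * σ * γ'⁻¹ : Γ) : G) ∈ C * K * C⁻¹
      have h1 : x⁻¹ * (σ : G) * x ∈ K := subset_tsupport f hx
      have h2 : ((γ' * σ * γ'⁻¹ : Γ) : G) = (γ * x) * (x⁻¹ * (σ : G) * x) * (γ * x)⁻¹ := by
        push_cast
        group
        rfl
      rw [h2]
      exact Set.mul_mem_mul (Set.mul_mem_mul hγC h1) (Set.inv_mem_inv.mpr hγC)
    · exact isConj_iff.mpr ⟨γ', rfl⟩
  refine ⟨hpart1, ?_⟩
  -- the finite support set in Γ
  have hLK : IsCompact (L * K * L⁻¹) := (hFc.mul hK).mul hFc.inv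
  have hN : {γ : Γ | (γ : G) ∈ L * K * L⁻¹}.Finite := discrete_inter_compact_finite Γ hLK
  set NF : Finset Γ := hN.toFinset with hNF
  have hvanish : ∀ (γ : Γ) (x : G), x ∈ F → f (x⁻¹ * (γ : G) * x) ≠ 0 → γ ∈ NF := by
    intro γ x hxF hne
    rw [hNF, Set.Finite.mem_toFinset]
    have h1 : x⁻¹ * (γ : G) * x ∈ K := subset_tsupport f hne
    have h2 : (γ : G) = x * (x⁻¹ * (γ : G) * x) * x⁻¹ := by group
    show (γ : G) ∈ L * K * L⁻¹
    rw [h2]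
    exact Set.mul_mem_mul (Set.mul_mem_mul (subset_closure hxF) h1)
      (Set.inv_mem_inv.mpr (subset_closure hxF))
  have hIzero : ∀ γ : Γ, γ ∉ NF → I γ = 0 := by
    intro γ hγ
    rw [hI]
    simp only
    have hae : ∀ᵐ x ∂μ.restrict F, f (x⁻¹ * (γ : G) * x) = 0 := by
      filter_upwards [ae_restrict_mem₀ hF.nullMeasurableSet] with x hx
      by_contra hne
      exact hγ (hvanish γ x hx hne)
    exact integral_eq_zero_of_ae hae
  have hazero : ∀ γ : Γ, γ ∉ NF → a γ = 0 := by
    intro γ h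
    rw [ha]
    simp only
    rw [hIzero γ h, mul_zero]
  have hconj_cont : ∀ γ : Γ, Continuous fun x : G => f (x⁻¹ * (γ : G) * x) :=
    fun γ => hf.comp ((continuous_inv.mul continuous_const).mul continuous_id)
  have hIint : ∀ γ : Γ, IntegrableOn (fun x => f (x⁻¹ * (γ : G) * x)) F μ :=
    fun γ => integrableOn_of_compact_closure μ (hconj_cont γ) hFc
  -- the left-hand side
  have hLHS : (∫ x in F, (∑' γ : Γ, f (x⁻¹ * (γ : G) * x) * tr γ) ∂μ) = ∑' γ : Γ, a γ := by
    have h2 : (∫ x in F, (∑' γ : Γ, f (x⁻¹ * (γ : G) * x) * tr γ) ∂μ)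
        = ∫ x in F, (∑ γ ∈ NF, f (x⁻¹ * (γ : G) * x) * tr γ) ∂μ := by
      apply integral_congr_ae
      filter_upwards [ae_restrict_mem₀ hF.nullMeasurableSet] with x hx
      apply tsum_eq_sum
      intro γ hγ
      by_cases hne : f (x⁻¹ * (γ : G) * x) = 0
      · rw [hne, zero_mul]
      · exact absurd (hvanish γ x hx hne) hγ
    rw [h2, integral_finset_sum _ (fun γ _ => (hIint γ).mul_const (tr γ))]
    have h3 : ∀ γ : Γ, (∫ x in F, f (x⁻¹ * (γ : G) * x) * tr γ ∂μ) = a γ := by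
      intro γ
      rw [integral_mul_const, ha, hI]
      simp only
      rw [mul_comm]
    rw [Finset.sum_congr rfl fun γ _ => h3 γ]
    exact (tsum_eq_sum (fun γ h => hazero γ h)).symm
  -- the conjugation parametrization
  have houteq : ∀ (σ : Γ) (q : Γ ⧸ Subgroup.centralizer ({σ} : Set Γ)),
      QuotientGroup.mk (Quotient.out q) = q := fun σ q => QuotientGroup.out_eq' q
  set cmap : (σ : Γ) → (Γ ⧸ Subgroup.centralizer ({σ} : Set Γ)) → Γ :=
    fun σ q => (Quotient.out q) * σ * (Quotient.out q)⁻¹ with hcmap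
  have hcmap_inj : ∀ σ : Γ, Function.Injective (cmap σ) := by
    intro σ q₁ q₂ heq
    rw [hcmap] at heq
    simp only at heq
    set τ₁ := Quotient.out q₁ with hτ₁
    set τ₂ := Quotient.out q₂ with hτ₂
    have hg1 : τ₂⁻¹ * (τ₁ * σ * τ₁⁻¹) * τ₁ = τ₂⁻¹ * τ₁ * σ := by group
    have hg2 : τ₂⁻¹ * (τ₂ * σ * τ₂⁻¹) * τ₁ = σ * (τ₂⁻¹ * τ₁) := by group
    have h5 : σ * (τ₂⁻¹ * τ₁) = (τ₂⁻¹ * τ₁) * σ := by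
      calc σ * (τ₂⁻¹ * τ₁) = τ₂⁻¹ * (τ₂ * σ * τ₂⁻¹) * τ₁ := hg2.symm
        _ = τ₂⁻¹ * (τ₁ * σ * τ₁⁻¹) * τ₁ := by rw [heq]
        _ = τ₂⁻¹ * τ₁ * σ := hg1
    have hmem : τ₂⁻¹ * τ₁ ∈ Subgroup.centralizer ({σ} : Set Γ) :=
      Subgroup.mem_centralizer_singleton_iff.mpr h5.symm
    have h6 := (QuotientGroup.eq (s := Subgroup.centralizer ({σ} : Set Γ))).mpr hmem
    rw [houteq, houteq] at h6
    exact h6.symm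
  -- decomposition of the centralizer-domain integrals
  have hdecomp : ∀ σ : Γ, (∫ x in Fc σ, f (x⁻¹ * (σ : G) * x) ∂μ)
      = ∑' q : Γ ⧸ Subgroup.centralizer ({σ} : Set Γ), I (cmap σ q) := by
    intro σ
    have hinvφ : ∀ h : Γ, h ∈ Subgroup.centralizer ({σ} : Set Γ) →
        ∀ x : G, f (((h : G) * x)⁻¹ * (σ : G) * ((h : G) * x)) = f (x⁻¹ * (σ : G) * x) := by
      intro h hH x
      have hcΓ : h * σ = σ * h := Subgroup.mem_centralizer_singleton_iff.mp hH
      have hc : (σ : G) * (h : G) = (h : G) * (σ : G) := by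
        exact_mod_cast (congrArg Subtype.val hcΓ).symm
      have key : ((h : G) * x)⁻¹ * (σ : G) * ((h : G) * x) = x⁻¹ * (σ : G) * x := by
        calc ((h : G) * x)⁻¹ * (σ : G) * ((h : G) * x)
            = x⁻¹ * ((h : G)⁻¹ * ((σ : G) * (h : G))) * x := by group
          _ = x⁻¹ * ((h : G)⁻¹ * ((h : G) * (σ : G))) * x := by rw [hc]
          _ = x⁻¹ * (σ : G) * x := by group
      rw [key]
    have hargs : ∀ (q : Γ ⧸ Subgroup.centralizer ({σ} : Set Γ)) (x : G),
        (((Quotient.out q : Γ) : G)⁻¹ * x)⁻¹ * (σ : G) * (((Quotient.out q : Γ) : G)⁻¹ * x)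
          = x⁻¹ * ((cmap σ q : Γ) : G) * x := by
      intro q x
      rw [hcmap]
      push_cast
      group
    have hfinφ : {q : Γ ⧸ Subgroup.centralizer ({σ} : Set Γ) |
        ∃ x ∈ F, f ((((Quotient.out q : Γ) : G)⁻¹ * x)⁻¹ * (σ : G)
          * (((Quotient.out q : Γ) : G)⁻¹ * x)) ≠ 0}.Finite := by
      apply Set.Finite.subset (hN.preimage (hcmap_inj σ).injOn)
      rintro q ⟨x, hxF, hne⟩
      show cmap σ q ∈ {γ : Γ | (γ : G) ∈ L * K * L⁻¹}
      rw [hargs q x] at hne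
      have hm := hvanish (cmap σ q) x hxF hne
      rw [hNF, Set.Finite.mem_toFinset] at hm
      exact hm
    have hres := subgroup_decomp μ Γ (Subgroup.centralizer ({σ} : Set Γ)) hF hFc (hFc' σ)
      (fun x => f (x⁻¹ * (σ : G) * x)) (hconj_cont σ) hinvφ hfinφ
    rw [hres]
    refine tsum_congr fun q => ?_
    rw [hI]
    refine integral_congr_ae (Filter.Eventually.of_forall fun x => ?_)
    show f ((((Quotient.out q : Γ) : G)⁻¹ * x)⁻¹ * (σ : G) * (((Quotient.out q : Γ) : G)⁻¹ * x))
      = f (x⁻¹ * ((cmap σ q : Γ) : G) * x)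
    rw [hargs q x]
  -- rewrite each term of the right-hand side
  have hR : ∀ σ : Γ, tr σ * (∫ x in Fc σ, f (x⁻¹ * (σ : G) * x) ∂μ)
      = ∑' q : Γ ⧸ Subgroup.centralizer ({σ} : Set Γ), a (cmap σ q) := by
    intro σ
    rw [hdecomp σ, ← tsum_mul_left]
    refine tsum_congr fun q => ?_
    rw [ha]
    simp only
    congr 1
    exact (htrconj (Quotient.out q) σ).symm
  -- the sigma-type parametrization of Γ by conjugacy classes
  set e : ((σ : S) × (Γ ⧸ Subgroup.centralizer ({(σ : Γ)} : Set Γ))) → Γ :=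
    fun p => cmap p.1 p.2 with he
  have hebij : Function.Bijective e := by
    constructor
    · rintro ⟨⟨σ₁, hσ₁⟩, q₁⟩ ⟨⟨σ₂, hσ₂⟩, q₂⟩ heq
      rw [he] at heq
      simp only at heq
      have hc1 : IsConj σ₁ (cmap σ₁ q₁) := isConj_iff.mpr ⟨Quotient.out q₁, rfl⟩
      have hc2 : IsConj σ₂ (cmap σ₁ q₁) := by
        rw [heq]; exact isConj_iff.mpr ⟨Quotient.out q₂, rfl⟩
      have hσeq : σ₁ = σ₂ := by
        have h1 := (hS (cmap σ₁ q₁)).choose_spec.2 σ₁ ⟨hσ₁, hc1⟩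
        have h2 := (hS (cmap σ₁ q₁)).choose_spec.2 σ₂ ⟨hσ₂, hc2⟩
        rw [h1, h2]
      subst hσeq
      obtain rfl : q₁ = q₂ := hcmap_inj σ₁ heq
      rfl
    · intro γ
      obtain ⟨σ0, ⟨hσ0S, hconj⟩, -⟩ := hS γ
      obtain ⟨c, hc⟩ := isConj_iff.mp hconj
      refine ⟨⟨⟨σ0, hσ0S⟩, QuotientGroup.mk c⟩, ?_⟩
      rw [he]
      simp only
      rw [hcmap]
      simp only
      set τ := Quotient.out (QuotientGroup.mk c : Γ ⧸ Subgroup.centralizer ({σ0} : Set Γ)) with hτdef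
      have hmem : c⁻¹ * τ ∈ Subgroup.centralizer ({σ0} : Set Γ) := by
        have h7 := houteq σ0 (QuotientGroup.mk c)
        exact (QuotientGroup.eq (s := Subgroup.centralizer ({σ0} : Set Γ))).mp h7.symm
      have hcomm : (c⁻¹ * τ) * σ0 = σ0 * (c⁻¹ * τ) :=
        Subgroup.mem_centralizer_singleton_iff.mp hmem
      have h6 : (c⁻¹ * τ) * σ0 * (c⁻¹ * τ)⁻¹ = σ0 := mul_inv_eq_iff_eq_mul.mpr hcomm
      calc τ * σ0 * τ⁻¹ = c * ((c⁻¹ * τ) * σ0 * (c⁻¹ * τ)⁻¹) * c⁻¹ := by group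
        _ = c * σ0 * c⁻¹ := by rw [h6]
        _ = γ := hc
  -- summability via finite support
  have hsupp : ∀ γ : Γ, a γ ≠ 0 → γ ∈ NF := by
    intro γ hne
    by_contra h
    exact hne (hazero γ h)
  have hpre : (e ⁻¹' (NF : Set Γ)).Finite :=
    Set.Finite.preimage hebij.1.injOn (NF.finite_toSet)
  have hsumb : ∀ σ : S, Summable fun q : Γ ⧸ Subgroup.centralizer ({(σ : Γ)} : Set Γ) =>
      a (e ⟨σ, q⟩) := by
    intro σ
    have hpre2 : ((cmap (σ : Γ)) ⁻¹' (NF : Set Γ)).Finite :=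
      Set.Finite.preimage (hcmap_inj _).injOn NF.finite_toSet
    apply summable_of_ne_finset_zero (s := hpre2.toFinset)
    intro q hq
    by_contra hne
    apply hq
    rw [Set.Finite.mem_toFinset]
    exact hsupp _ hne
  have hsum : Summable (fun p => a (e p)) := by
    apply summable_of_ne_finset_zero (s := hpre.toFinset)
    intro p hp
    by_contra hne
    apply hp
    rw [Set.Finite.mem_toFinset]
    exact hsupp (e p) hne
  -- conclusion
  rw [hLHS]
  calc ∑' γ : Γ, a γ = ∑' p, a (e p) := ((Equiv.ofBijective e hebij).tsum_eq a).symm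
    _ = ∑' (σ : S), ∑' (q : Γ ⧸ Subgroup.centralizer ({(σ : Γ)} : Set Γ)), a (e ⟨σ, q⟩) :=
        Summable.tsum_sigma' hsumb hsum
    _ = ∑' σ : S, tr (σ : Γ) * ∫ x in Fc (σ : Γ), f (x⁻¹ * ((σ : Γ) : G) * x) ∂μ :=
        tsum_congr fun σ => (hR (σ : Γ)).symm
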